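/- Let (R, 𝔪) ⊆ (S, 𝔫) be local domains with 𝔫 ∩ R = 𝔪, S integral over R, and let I ⊆ S be the set of elements x satisfying a monic integral dependence relation xⁿ + r₁xⁿ⁻¹ + ⋯ + rₙ = 0 with all rᵢ ∈ 𝔪. Then I is an ideal of S equal to 𝔫 (every element of 𝔫 has a power in I, and I ∩ R = 𝔪, I is 𝔫-primary). -/

import Mathlib

open IsLocalRing

open Polynomial in
/-- Determinant trick: an element of `I·S` (with `S` integral over `R`) satisfies a monic
polynomial of positive degree all of whose lower coefficients lie in `I`. -/
lemma aux_integral_over_ideal {R S : Type*} [CommRing R] [CommRing S] [Algebra R S]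
    [Algebra.IsIntegral R S] [Nontrivial R] (I : Ideal R) {y : S} (hy : y ∈ I.map (algebraMap R S)) :
    ∃ p : Polynomial R, p.Monic ∧ 0 < p.natDegree ∧
      (∀ i < p.natDegree, p.coeff i ∈ I) ∧ Polynomial.aeval y p = 0 := by
  classical
  rw [Ideal.map, Ideal.span, Submodule.mem_span_set'] at hy
  obtain ⟨n, c, g, hsum⟩ := hy
  -- the subalgebra generated by the `c i`
  set A : Subalgebra R S := Algebra.adjoin R (Set.range c) with hA
  have hfg : A.toSubmodule.FG :=
    fg_adjoin_of_finite (Set.finite_range c) fun x _ => Algebra.IsIntegral.isIntegral x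
  have : Module.Finite R A := ⟨(Submodule.fg_top _).mpr hfg⟩
  have hcA : ∀ i, c i ∈ A := fun i => Algebra.subset_adjoin ⟨i, rfl⟩
  have hgI : ∀ i, ∃ m ∈ I, algebraMap R S m = (g i : S) := by
    intro i
    obtain ⟨x, hx, hfx⟩ := (g i).2
    exact ⟨x, hx, hfx⟩
  choose m hmI hmg using hgI
  have hyA : y ∈ A := by
    rw [← hsum]
    exact Subalgebra.sum_mem _ fun i _ => by
      rw [smul_eq_mul, ← hmg i]
      exact A.mul_mem (hcA i) (A.algebraMap_mem (m i))
  set y' : A := ⟨y, hyA⟩ with hy'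
  have hy'mem : y' ∈ I • (⊤ : Submodule R A) := by
    have : y' = ∑ i, m i • (⟨c i, hcA i⟩ : A) := by
      apply Subtype.ext
      push_cast
      show y = _
      rw [← hsum]
      exact (Finset.sum_congr rfl fun i _ => by
        rw [smul_eq_mul, Algebra.smul_def, ← hmg i, mul_comm]).symm
    rw [this]
    exact Submodule.sum_mem _ fun i _ => Submodule.smul_mem_smul (hmI i) trivial
  have hmul : ∀ z ∈ I • (⊤ : Submodule R A), ∀ a : A, z * a ∈ I • (⊤ : Submodule R A) := by
    intro z hz
    refine Submodule.smul_induction_on hz (fun r hr w _ a => ?_) (fun u v hu hv a => ?_)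
    · rw [smul_mul_assoc]; exact Submodule.smul_mem_smul hr trivial
    · rw [add_mul]; exact add_mem (hu a) (hv a)
  have hrange : LinearMap.range (Algebra.lmul R A y') ≤ I • (⊤ : Submodule R A) := by
    rintro _ ⟨a, rfl⟩
    exact hmul y' hy'mem a
  obtain ⟨p, hmonic, -, hcoeff, haeval⟩ :=
    LinearMap.exists_monic_and_coeff_mem_pow_and_aeval_eq_zero_of_range_le_smul R
      (Algebra.lmul R A y') I hrange
  have haeval' : Polynomial.aeval y' p = 0 := by
    have := Polynomial.aeval_algHom_apply (Algebra.lmul R A) y' p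
    rw [haeval] at this
    exact Algebra.lmul_injective (by rw [← this, map_zero])
  have haevalS : Polynomial.aeval y p = 0 := by
    have := Polynomial.aeval_algHom_apply A.val y' p
    rw [haeval', map_zero] at this
    exact this
  refine ⟨p * X, hmonic.mul monic_X, ?_, ?_, ?_⟩
  · rw [natDegree_mul_X hmonic.ne_zero]; omega
  · intro i hi
    rw [natDegree_mul_X hmonic.ne_zero] at hi
    cases i with
    | zero => simp [coeff_mul_X_zero]
    | succ j =>
      rw [coeff_mul_X]
      have hj : j < p.natDegree := by omega
      exact Ideal.pow_le_self (by omega) (hcoeff j)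
  · rw [map_mul, haevalS, zero_mul]

/-- Let `(R,𝔪) ⊆ (S,𝔫)` be local domains with `𝔫 ∩ R = 𝔪` and `S` integral over `R`,
and let `I ⊆ S` be the set of elements satisfying a monic integral dependence relation
all of whose lower coefficients lie in `𝔪`.  Then `I` is an ideal of `S`, equal to `𝔫`,
and `I ∩ R = 𝔪`. -/
theorem integral_dependence_ideal_eq_maximalIdeal {R S : Type*} [CommRing R]
    [CommRing S] [IsDomain R] [IsDomain S] [IsLocalRing R] [IsLocalRing S]
    [Algebra R S] [Algebra.IsIntegral R S]
    (hinj : Function.Injective (algebraMap R S))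
    (hlying : (maximalIdeal S).comap (algebraMap R S) = maximalIdeal R) :
    {x : S | ∃ p : Polynomial R, p.Monic ∧ 0 < p.natDegree ∧
        (∀ i < p.natDegree, p.coeff i ∈ maximalIdeal R) ∧ Polynomial.aeval x p = 0}
      = (maximalIdeal S : Set S) ∧
    (algebraMap R S) ⁻¹' {x : S | ∃ p : Polynomial R, p.Monic ∧ 0 < p.natDegree ∧
        (∀ i < p.natDegree, p.coeff i ∈ maximalIdeal R) ∧ Polynomial.aeval x p = 0}
      = (maximalIdeal R : Set R) := by
  have h1 : {x : S | ∃ p : Polynomial R, p.Monic ∧ 0 < p.natDegree ∧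
      (∀ i < p.natDegree, p.coeff i ∈ maximalIdeal R) ∧ Polynomial.aeval x p = 0}
      = (maximalIdeal S : Set S) := by
    apply Set.Subset.antisymm
    · -- any such x lies in 𝔫
      rintro x ⟨p, hm, hd, hc, he⟩
      have hxn : x ^ p.natDegree ∈ maximalIdeal S := by
        have hs := Polynomial.aeval_eq_sum_range (p := p) x
        rw [he, Finset.sum_range_succ, hm.coeff_natDegree, one_smul] at hs
        have : x ^ p.natDegree = -∑ i ∈ Finset.range p.natDegree, p.coeff i • x ^ i := by
          exact eq_neg_of_add_eq_zero_right hs.symm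
        rw [this]
        refine neg_mem (Ideal.sum_mem _ fun i hi => ?_)
        rw [Algebra.smul_def]
        refine Ideal.mul_mem_right _ _ ?_
        have : p.coeff i ∈ (maximalIdeal S).comap (algebraMap R S) := by
          rw [hlying]; exact hc i (Finset.mem_range.mp hi)
        exact this
      exact ((maximalIdeal.isMaximal S).isPrime.mem_of_pow_mem _ hxn)
    · -- x ∈ 𝔫 : some power lies in 𝔪S, apply the determinant trick & expand
      intro x hx
      have hrad : x ∈ ((maximalIdeal R).map (algebraMap R S)).radical := by
        rw [Ideal.radical_eq_sInf]
        refine Ideal.mem_sInf.2 ?_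
        rintro J ⟨hle, hprime⟩
        haveI := hprime
        have hcomap : (maximalIdeal R) ≤ J.comap (algebraMap R S) :=
          le_trans Ideal.le_comap_map (Ideal.comap_mono hle)
        have hceq : J.comap (algebraMap R S) = maximalIdeal R :=
          ((maximalIdeal.isMaximal R).eq_of_le (Ideal.comap_ne_top _ hprime.ne_top)
            hcomap).symm
        haveI : J.IsMaximal :=
          Ideal.isMaximal_of_isIntegral_of_isMaximal_comap J
            (hceq ▸ maximalIdeal.isMaximal R)
        rw [IsLocalRing.eq_maximalIdeal this]
        exact hx
      obtain ⟨k, hk⟩ := hrad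
      have hk1 : x ^ (k + 1) ∈ (maximalIdeal R).map (algebraMap R S) := by
        rw [pow_succ]
        exact Ideal.mul_mem_right _ _ hk
      obtain ⟨p, hm, hd, hc, he⟩ := aux_integral_over_ideal (maximalIdeal R) hk1
      refine ⟨Polynomial.expand R (k + 1) p, hm.expand (Nat.succ_pos k), ?_, ?_, ?_⟩
      · rw [Polynomial.natDegree_expand]
        positivity
      · intro i hi
        rw [Polynomial.natDegree_expand] at hi
        rw [Polynomial.coeff_expand (Nat.succ_pos k)]
        split_ifs with h
        · refine hc _ ?_
          have hlt : i < (k + 1) * p.natDegree := by rw [mul_comm]; exact hi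
          exact Nat.div_lt_of_lt_mul hlt
        · exact Submodule.zero_mem _
      · rw [Polynomial.expand_aeval, he]
  refine ⟨h1, ?_⟩
  rw [h1, ← hlying]
  rfl
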